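/- Let (u₁, …, uₙ) be a basis of ℝⁿ and let α₁, …, αₙ be real numbers such that the family (1, α₁, …, αₙ) is linearly independent over ℚ. Then the additive subgroup ℤu₁ + ⋯ + ℤuₙ + ℤu, where u = α₁u₁ + ⋯ + αₙuₙ, is dense in ℝⁿ. -/

import Mathlib

lemma aux_discrete_of_no_line {E : Type*} [NormedAddCommGroup E] [NormedSpace ℝ E]
    [ProperSpace E] (D : AddSubgroup E) (hD : IsClosed (D : Set E))
    (hline : ∀ x : E, x ≠ 0 → (∀ t : ℝ, t • x ∈ D) → False) :
    ∃ ε : ℝ, 0 < ε ∧ ∀ x ∈ D, ‖x‖ < ε → x = 0 := by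
  by_contra h
  push_neg at h
  choose g hgD hgn hg0 using fun k : ℕ => h (1 / (k + 1)) (by positivity)
  set v : ℕ → E := fun k => ‖g k‖⁻¹ • g k with hv
  have hgpos : ∀ k, (0:ℝ) < ‖g k‖ := fun k => norm_pos_iff.2 (hg0 k)
  have hvs : ∀ k, v k ∈ Metric.sphere (0:E) 1 := by
    intro k
    simp only [hv, mem_sphere_iff_norm, sub_zero, norm_smul, norm_inv, norm_norm]
    exact inv_mul_cancel₀ (norm_ne_zero_iff.2 (hg0 k))
  obtain ⟨e, he, σ, hσ, hve⟩ := (isCompact_sphere (0:E) 1).tendsto_subseq hvs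
  have he0 : e ≠ 0 := by
    intro h0
    rw [h0, mem_sphere_iff_norm, sub_zero, norm_zero] at he
    norm_num at he
  refine hline e he0 fun t => ?_
  have hglim : Filter.Tendsto (fun j => ‖g (σ j)‖) Filter.atTop (nhds 0) := by
    refine squeeze_zero (fun j => (hgpos _).le) (fun j => ?_) tendsto_one_div_add_atTop_nhds_zero_nat
    have h2 : (j:ℝ) + 1 ≤ (σ j : ℝ) + 1 := by exact_mod_cast Nat.succ_le_succ hσ.le_apply
    exact le_trans (hgn (σ j)).le (one_div_le_one_div_of_le (by positivity) h2)
  set c : ℕ → ℝ := fun j => (⌊t / ‖g (σ j)‖⌋ : ℝ) * ‖g (σ j)‖ with hc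
  have hclim : Filter.Tendsto c Filter.atTop (nhds t) := by
    have h1 : Filter.Tendsto (fun j => c j - t) Filter.atTop (nhds 0) := by
      refine squeeze_zero_norm (fun j => ?_) hglim
      have hr := hgpos (σ j)
      have ht : t = (t / ‖g (σ j)‖) * ‖g (σ j)‖ := by field_simp
      have heq : c j - t = -(Int.fract (t / ‖g (σ j)‖) * ‖g (σ j)‖) := by
        rw [hc]
        nth_rewrite 2 [ht]
        rw [Int.fract]
        ring
      rw [heq, norm_neg, Real.norm_eq_abs, abs_mul, abs_of_nonneg (Int.fract_nonneg _),
        abs_of_pos hr]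
      nlinarith [Int.fract_lt_one (t / ‖g (σ j)‖), Int.fract_nonneg (t / ‖g (σ j)‖), hr]
    have := h1.add_const t
    simpa using this
  have hlim : Filter.Tendsto (fun j => c j • v (σ j)) Filter.atTop (nhds (t • e)) :=
    hclim.smul hve
  refine hD.mem_of_tendsto hlim (Filter.Eventually.of_forall fun j => ?_)
  have heq2 : c j • v (σ j) = ⌊t / ‖g (σ j)‖⌋ • g (σ j) := by
    rw [hc, hv]
    rw [smul_smul, ← Int.cast_smul_eq_zsmul ℝ]
    congr 1
    rw [mul_assoc, mul_inv_cancel₀ (hgpos (σ j)).ne', mul_one]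
  rw [heq2]
  exact AddSubgroup.zsmul_mem _ (hgD _) _

lemma aux_exists_functional {E : Type*} [NormedAddCommGroup E] [NormedSpace ℝ E]
    [FiniteDimensional ℝ E] (G : AddSubgroup E) (hc : IsClosed (G : Set E))
    (hspan : Submodule.span ℝ (G : Set E) = ⊤) (hne : (G : Set E) ≠ Set.univ) :
    ∃ φ : E →ₗ[ℝ] ℝ, φ ≠ 0 ∧ ∀ x ∈ G, ∃ m : ℤ, φ x = m := by
  classical
  set V : Submodule ℝ E :=
    { carrier := {x | ∀ t : ℝ, t • x ∈ G}
      add_mem' := fun {a b} ha hb t => by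
        rw [smul_add]; exact G.add_mem (ha t) (hb t)
      zero_mem' := fun t => by rw [smul_zero]; exact G.zero_mem
      smul_mem' := fun s {x} hx t => by rw [smul_smul]; exact hx (t * s) } with hV
  have hVG : ∀ x ∈ V, x ∈ G := fun x hx => by simpa using hx 1
  have hVne : V ≠ ⊤ := by
    intro h
    exact hne (Set.eq_univ_of_forall fun x => hVG x (h ▸ Submodule.mem_top))
  obtain ⟨W, hW⟩ := Submodule.exists_isCompl V
  set D : AddSubgroup E := G ⊓ W.toAddSubgroup with hD
  have hDc : IsClosed (D : Set E) := by
    have : (D : Set E) = (G : Set E) ∩ (W : Set E) := rfl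
    rw [this]
    exact hc.inter W.closed_of_finiteDimensional
  have hnoline : ∀ x : E, x ≠ 0 → (∀ t : ℝ, t • x ∈ D) → False := by
    intro x hx ht
    have hxV : x ∈ V := fun t => (ht t).1
    have hxW : x ∈ W := by simpa using (ht 1).2
    exact hx (Submodule.disjoint_def.1 hW.disjoint x hxV hxW)
  obtain ⟨ε, hε, hsep⟩ := aux_discrete_of_no_line D hDc hnoline
  set W' : Submodule ℝ E := Submodule.span ℝ (D : Set E) with hW'
  have hDW' : (D : Set E) ⊆ W' := Submodule.subset_span
  have hW'W : W' ≤ W := Submodule.span_le.2 fun x hx => hx.2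
  have hcompl : IsCompl V W' := by
    constructor
    · exact hW.disjoint.mono_right hW'W
    · rw [codisjoint_iff]
      rw [← top_le_iff, ← hspan, Submodule.span_le]
      intro g hg
      set vg : E := ((Submodule.projectionOnto V W hW) g : E) with hvg
      have hvmem : vg ∈ V := by rw [hvg]; exact Submodule.coe_mem _
      have hdec : vg + ((Submodule.projectionOnto W V hW.symm) g : E) = g :=
        Submodule.projection_add_projection_eq_self hW g
      have hwG : g - vg ∈ G := G.sub_mem hg (hVG _ hvmem)
      have hwW : g - vg ∈ W := by
        have := Submodule.coe_mem ((Submodule.projectionOnto W V hW.symm) g)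
        rw [← hdec]; simpa using this
      have : g - vg ∈ W' := hDW' ⟨hwG, hwW⟩
      have hgeq : g = vg + (g - vg) := by abel
      rw [hgeq]
      exact Submodule.add_mem_sup hvmem ‹g - vg ∈ W'›
  -- the lattice inside W'
  set L : Submodule ℤ W' := (AddSubgroup.toIntSubmodule D).comap ((W'.subtype).restrictScalars ℤ) with hL
  have hLmem : ∀ x : W', x ∈ L ↔ (x : E) ∈ D := fun x => Iff.rfl
  haveI : DiscreteTopology L := by
    rw [discreteTopology_iff_isOpen_singleton_zero]
    rw [Metric.isOpen_singleton_iff]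
    refine ⟨ε, hε, fun y hy => ?_⟩
    rw [dist_zero_right] at hy
    have hyE : ((y : W') : E) ∈ D := (hLmem _).1 y.2
    have : ((y : W') : E) = 0 := hsep _ hyE (by simpa using hy)
    ext
    simpa using this
  haveI : IsZLattice ℝ L := by
    constructor
    have hinj : Function.Injective W'.subtype := Submodule.injective_subtype W'
    apply Submodule.map_injective_of_injective hinj
    rw [Submodule.map_span, Submodule.map_top, Submodule.range_subtype]
    have himg : W'.subtype '' (L : Set W') = (D : Set E) := by
      ext x
      constructor
      · rintro ⟨y, hy, rfl⟩; exact hy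
      · intro hx; exact ⟨⟨x, hDW' hx⟩, hx, rfl⟩
    rw [himg, ← hW']
  haveI : Module.Free ℤ L := ZLattice.module_free ℝ L
  haveI : Module.Finite ℤ L := ZLattice.module_finite ℝ L
  set ι := Module.Free.ChooseBasisIndex ℤ L with hι
  set bZ : Module.Basis ι ℤ L := Module.Free.chooseBasis ℤ L with hbZ
  set bR : Module.Basis ι ℝ W' := Module.Basis.ofZLatticeBasis ℝ L bZ with hbR
  haveI : Nonempty ι := by
    by_contra hempty
    haveI : IsEmpty ι := not_nonempty_iff.1 hempty
    have : W' = ⊥ := by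
      have h0 : Subsingleton W' := bR.repr.toEquiv.subsingleton
      exact Submodule.eq_bot_of_subsingleton
    rw [this] at hcompl
    exact hVne (by simpa using codisjoint_iff.1 hcompl.codisjoint)
  set i₀ : ι := Classical.arbitrary ι
  set π : E →ₗ[ℝ] W' := Submodule.projectionOnto W' V hcompl.symm with hπ
  refine ⟨(bR.coord i₀).comp π, ?_, ?_⟩
  · intro h0
    have h1 : ((bR.coord i₀).comp π) (bR i₀ : E) = 1 := by
      rw [LinearMap.comp_apply, hπ, Submodule.projectionOnto_apply_left, Module.Basis.coord_apply,
        Module.Basis.repr_self, Finsupp.single_eq_same]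
    rw [h0] at h1
    simp at h1
  · intro x hx
    set vx : E := ((Submodule.projectionOnto V W' hcompl) x : E) with hvx
    have hvmem : vx ∈ V := by rw [hvx]; exact Submodule.coe_mem _
    have hdec : vx + ((Submodule.projectionOnto W' V hcompl.symm) x : E) = x :=
      Submodule.projection_add_projection_eq_self hcompl x
    have hwD : ((π x : W') : E) ∈ D := by
      constructor
      · have heqw : ((π x : W') : E) = x - vx :=
          eq_sub_of_add_eq (by rw [add_comm]; exact hdec)
        rw [heqw]
        exact G.sub_mem hx (hVG _ hvmem)
      · exact hW'W (Submodule.coe_mem _)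
    have hwL : (π x : W') ∈ L := (hLmem _).2 hwD
    refine ⟨bZ.repr ⟨π x, hwL⟩ i₀, ?_⟩
    rw [LinearMap.comp_apply, Module.Basis.coord_apply]
    have := Module.Basis.ofZLatticeBasis_repr_apply ℝ L bZ ⟨π x, hwL⟩ i₀
    rw [← hbR] at this
    simpa using this

/-- Kronecker-type density criterion: if `(u₁, …, uₙ)` is a basis of `ℝⁿ` and
`1, α₁, …, αₙ` are linearly independent over `ℚ`, then
`ℤu₁ + ⋯ + ℤuₙ + ℤu` with `u = α₁u₁ + ⋯ + αₙuₙ` is dense in `ℝⁿ`. -/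
theorem dense_lattice_add_zmultiples_of_linearIndependent (n : ℕ)
    (b : Module.Basis (Fin n) ℝ (Fin n → ℝ)) (α : Fin n → ℝ)
    (hα : LinearIndependent ℚ (Fin.cons (1 : ℝ) α : Fin (n + 1) → ℝ)) :
    Dense (((⨆ i, AddSubgroup.zmultiples (b i)) ⊔
        AddSubgroup.zmultiples (∑ i, α i • b i) :
      AddSubgroup (Fin n → ℝ)) : Set (Fin n → ℝ)) := by
  classical
  by_contra hdense
  set G : AddSubgroup (Fin n → ℝ) := (⨆ i, AddSubgroup.zmultiples (b i)) ⊔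
      AddSubgroup.zmultiples (∑ i, α i • b i) with hG
  have hbG : ∀ i, b i ∈ G := fun i =>
    SetLike.le_def.1 ((le_iSup (fun i => AddSubgroup.zmultiples (b i)) i).trans le_sup_left)
      (AddSubgroup.mem_zmultiples _)
  have huG : (∑ i, α i • b i) ∈ G :=
    SetLike.le_def.1 le_sup_right (AddSubgroup.mem_zmultiples _)
  set Gc := G.topologicalClosure with hGc
  have hGcc : IsClosed (Gc : Set (Fin n → ℝ)) := G.isClosed_topologicalClosure
  have hGsub : (G : Set (Fin n → ℝ)) ⊆ Gc := G.le_topologicalClosure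
  have hcoe : (Gc : Set (Fin n → ℝ)) = closure (G : Set (Fin n → ℝ)) := rfl
  have hspan : Submodule.span ℝ (Gc : Set (Fin n → ℝ)) = ⊤ := by
    rw [eq_top_iff, ← b.span_eq]
    refine Submodule.span_mono ?_
    rintro x ⟨i, rfl⟩
    exact hGsub (hbG i)
  have hne : (Gc : Set (Fin n → ℝ)) ≠ Set.univ := by
    intro h
    exact hdense (by rw [dense_iff_closure_eq, ← hcoe, h])
  obtain ⟨φ, hφ0, hφint⟩ := aux_exists_functional Gc hGcc hspan hne
  choose c hc using fun i => hφint _ (hGsub (hbG i))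
  obtain ⟨m, hm⟩ := hφint _ (hGsub huG)
  have hsum : φ (∑ i, α i • b i) = ∑ i, α i * (c i : ℝ) := by
    rw [map_sum]
    exact Finset.sum_congr rfl fun i _ => by rw [map_smul, hc, smul_eq_mul]
  have hrel : ∑ j : Fin (n + 1),
      ((Fin.cons (-(m : ℚ)) (fun i => (c i : ℚ)) : Fin (n+1) → ℚ) j) •
        ((Fin.cons (1 : ℝ) α : Fin (n+1) → ℝ) j) = 0 := by
    rw [Fin.sum_univ_succ]
    simp only [Fin.cons_succ, Fin.cons_zero]
    have h1 : ∀ i, ((c i : ℚ)) • α i = α i * (c i : ℝ) := fun i => by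
      rw [Rat.smul_def]; push_cast; ring
    rw [Finset.sum_congr rfl fun i _ => h1 i, ← hsum, hm, Rat.smul_def]
    push_cast
    ring
  have hzero := Fintype.linearIndependent_iff.1 hα _ hrel
  have hc0 : ∀ i, c i = 0 := by
    intro i
    have := hzero i.succ
    rw [Fin.cons_succ] at this
    exact_mod_cast this
  refine hφ0 (b.ext fun i => ?_)
  rw [hc i, hc0 i]
  simp
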